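/- Suppose L is additionally linearly ordered. Let S = (R_i)_{i∈I} and S' = (R'_i)_{i∈I} be two families of fuzzy relations on U indexed by the same set I, and let X, X' be fuzzy relations on U. Then for each k ∈ {1,2,3}: (a) if SD_k(S)(X) < (X ≈ X') ⊓ (S ≈ S') then SD_k(S')(X') = SD_k(S)(X); (b) if SD_k(S)(X) ≥ (X ≈ X') ⊓ (S ≈ S') then SD_k(S')(X') ≥ (X ≈ X') ⊓ (S ≈ S'). -/

import Mathlib

open scoped symmDiff

/- L is a linearly ordered complete Heyting algebra, i.e. a complete linear order,
regarded as a complete residuated lattice with ⊗ = ⊓, residuum the Heyting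
implication ⇨, biresiduum ⇔ (`bihimp`), and top element as the unit 1. -/
variable {L : Type*} [CompleteLinearOrder L] {U : Type*}

/-- Composition of fuzzy relations: (R ∘ P)(u,v) = ⨆ w, R(u,w) ⊓ P(w,v). -/
def fcomp (R P : U → U → L) : U → U → L := fun u v => ⨆ w, R u w ⊓ P w v

/-- Inclusion degree of fuzzy relations: R ≲ Q. -/
def incl (R Q : U → U → L) : L := ⨅ u, ⨅ v, R u v ⇨ Q u v

/-- Equality degree of fuzzy relations: R ≈ Q. -/
def eqd (R Q : U → U → L) : L := ⨅ u, ⨅ v, R u v ⇔ Q u v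

/-- SD_1(S)(X) = ⨅ i, ((X ∘ R_i) ≲ (R_i ∘ X)). -/
def SD1 {I : Type*} (S : I → U → U → L) (X : U → U → L) : L :=
  ⨅ i, incl (fcomp X (S i)) (fcomp (S i) X)

/-- SD_2(S)(X) = ⨅ i, ((R_i ∘ X) ≲ (X ∘ R_i)). -/
def SD2 {I : Type*} (S : I → U → U → L) (X : U → U → L) : L :=
  ⨅ i, incl (fcomp (S i) X) (fcomp X (S i))

/-- SD_3(S)(X) = SD_1(S)(X) ⊓ SD_2(S)(X). -/
def SD3 {I : Type*} (S : I → U → U → L) (X : U → U → L) : L :=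
  SD1 S X ⊓ SD2 S X

/-- Degree of equality of two families of fuzzy relations: (S ≈ S') = ⨅ i, (R_i ≈ R'_i). -/
def famEq {I : Type*} (S S' : I → U → U → L) : L := ⨅ i, eqd (S i) (S' i)

/-- Over a linearly ordered complete Heyting algebra, for each k ∈ {1,2,3}:
(a) if SD_k(S)(X) < (X ≈ X') ⊓ (S ≈ S') then SD_k(S')(X') = SD_k(S)(X);
(b) if SD_k(S)(X) ≥ (X ≈ X') ⊓ (S ≈ S') then SD_k(S')(X') ≥ (X ≈ X') ⊓ (S ≈ S'). -/
lemma eqd_symm (R Q : U → U → L) : eqd R Q = eqd Q R := by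
  unfold eqd; simp [bihimp_comm]

lemma eqd_le (R Q : U → U → L) (u v : U) : eqd R Q ≤ R u v ⇨ Q u v := by
  refine le_trans (iInf_le _ u) (le_trans (iInf_le _ v) ?_)
  rw [bihimp_def]; exact inf_le_right

lemma eqd_fcomp (X X' R R' : U → U → L) :
    eqd X X' ⊓ eqd R R' ≤ eqd (fcomp X R) (fcomp X' R') := by
  refine le_iInf fun u => le_iInf fun v => ?_
  refine le_bihimp ((inf_comm _ _).trans_le ?_) ((inf_comm _ _).trans_le ?_)
  swap
  ·
    show _ ⊓ (⨆ w, X u w ⊓ R w v) ≤ ⨆ w, X' u w ⊓ R' w v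
    rw [inf_iSup_eq]
    refine iSup_le fun w => le_iSup_of_le w ?_
    have h1 : eqd X X' ⊓ eqd R R' ⊓ (X u w ⊓ R w v) ≤ X' u w := by
      calc eqd X X' ⊓ eqd R R' ⊓ (X u w ⊓ R w v) ≤ (X u w ⇨ X' u w) ⊓ X u w := by
            exact inf_le_inf (inf_le_left.trans (eqd_le X X' u w)) inf_le_left
        _ ≤ X' u w := by rw [inf_comm, inf_himp]; exact inf_le_right
    have h2 : eqd X X' ⊓ eqd R R' ⊓ (X u w ⊓ R w v) ≤ R' w v := by
      calc eqd X X' ⊓ eqd R R' ⊓ (X u w ⊓ R w v) ≤ (R w v ⇨ R' w v) ⊓ R w v := by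
            exact inf_le_inf (inf_le_right.trans (eqd_le R R' w v)) inf_le_right
        _ ≤ R' w v := by rw [inf_comm, inf_himp]; exact inf_le_right
    exact le_inf h1 h2
  · show _ ⊓ (⨆ w, X' u w ⊓ R' w v) ≤ ⨆ w, X u w ⊓ R w v
    rw [inf_iSup_eq]
    refine iSup_le fun w => le_iSup_of_le w ?_
    have h1 : eqd X X' ⊓ eqd R R' ⊓ (X' u w ⊓ R' w v) ≤ X u w := by
      calc eqd X X' ⊓ eqd R R' ⊓ (X' u w ⊓ R' w v) ≤ (X' u w ⇨ X u w) ⊓ X' u w := by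
            refine inf_le_inf (inf_le_left.trans ?_) inf_le_left
            rw [eqd_symm]; exact eqd_le X' X u w
        _ ≤ X u w := by rw [inf_comm, inf_himp]; exact inf_le_right
    have h2 : eqd X X' ⊓ eqd R R' ⊓ (X' u w ⊓ R' w v) ≤ R w v := by
      calc eqd X X' ⊓ eqd R R' ⊓ (X' u w ⊓ R' w v) ≤ (R' w v ⇨ R w v) ⊓ R' w v := by
            refine inf_le_inf (inf_le_right.trans ?_) inf_le_right
            rw [eqd_symm]; exact eqd_le R' R w v
        _ ≤ R w v := by rw [inf_comm, inf_himp]; exact inf_le_right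
    exact le_inf h1 h2

lemma incl_stable (A A' B B' : U → U → L) :
    eqd A A' ⊓ eqd B B' ⊓ incl A B ≤ incl A' B' := by
  refine le_iInf fun u => le_iInf fun v => ?_
  rw [le_himp_iff]
  set c := eqd A A' ⊓ eqd B B' ⊓ incl A B with hc
  have himp_step : ∀ (x y : L), c ≤ x ⇨ y → c ⊓ x ≤ y := fun x y h => by
    calc c ⊓ x ≤ (x ⇨ y) ⊓ x := inf_le_inf h le_rfl
      _ ≤ y := by rw [inf_comm, inf_himp]; exact inf_le_right
  have hA : c ⊓ A' u v ≤ A u v := himp_step _ _ (by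
    refine (inf_le_left.trans inf_le_left).trans ?_
    rw [eqd_symm]; exact eqd_le A' A u v)
  have hAB : c ⊓ A u v ≤ B u v := himp_step _ _ (by
    exact inf_le_right.trans (le_trans (iInf_le _ u) (iInf_le _ v)))
  have hB : c ⊓ B u v ≤ B' u v := himp_step _ _ (by
    exact (inf_le_left.trans inf_le_right).trans (eqd_le B B' u v))
  calc c ⊓ A' u v ≤ c ⊓ A u v := le_inf inf_le_left hA
    _ ≤ c ⊓ B u v := le_inf inf_le_left hAB
    _ ≤ B' u v := hB

lemma famEq_symm {I : Type*} (S S' : I → U → U → L) : famEq S S' = famEq S' S := by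
  unfold famEq; simp [eqd_symm]

lemma sd1_stable {I : Type*} (S S' : I → U → U → L) (X X' : U → U → L) :
    eqd X X' ⊓ famEq S S' ⊓ SD1 S X ≤ SD1 S' X' := by
  refine le_iInf fun i => ?_
  have h1 : eqd X X' ⊓ famEq S S' ≤ eqd (fcomp X (S i)) (fcomp X' (S' i)) :=
    le_trans (inf_le_inf le_rfl (iInf_le _ i)) (eqd_fcomp X X' (S i) (S' i))
  have h2 : eqd X X' ⊓ famEq S S' ≤ eqd (fcomp (S i) X) (fcomp (S' i) X') := by
    refine le_trans ?_ (eqd_fcomp (S i) (S' i) X X')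
    exact le_inf (inf_le_right.trans (iInf_le _ i)) inf_le_left
  refine le_trans ?_ (incl_stable (fcomp X (S i)) (fcomp X' (S' i))
    (fcomp (S i) X) (fcomp (S' i) X'))
  exact inf_le_inf (le_inf h1 h2) (iInf_le _ i)

lemma sd2_stable {I : Type*} (S S' : I → U → U → L) (X X' : U → U → L) :
    eqd X X' ⊓ famEq S S' ⊓ SD2 S X ≤ SD2 S' X' := by
  refine le_iInf fun i => ?_
  have h1 : eqd X X' ⊓ famEq S S' ≤ eqd (fcomp X (S i)) (fcomp X' (S' i)) :=
    le_trans (inf_le_inf le_rfl (iInf_le _ i)) (eqd_fcomp X X' (S i) (S' i))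
  have h2 : eqd X X' ⊓ famEq S S' ≤ eqd (fcomp (S i) X) (fcomp (S' i) X') := by
    refine le_trans ?_ (eqd_fcomp (S i) (S' i) X X')
    exact le_inf (inf_le_right.trans (iInf_le _ i)) inf_le_left
  refine le_trans ?_ (incl_stable (fcomp (S i) X) (fcomp (S' i) X')
    (fcomp X (S i)) (fcomp X' (S' i)))
  exact inf_le_inf (le_inf h2 h1) (iInf_le _ i)

lemma sd3_stable {I : Type*} (S S' : I → U → U → L) (X X' : U → U → L) :
    eqd X X' ⊓ famEq S S' ⊓ SD3 S X ≤ SD3 S' X' := by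
  unfold SD3
  refine le_inf ?_ ?_
  · exact le_trans (inf_le_inf le_rfl inf_le_left) (sd1_stable S S' X X')
  · exact le_trans (inf_le_inf le_rfl inf_le_right) (sd2_stable S S' X X')

lemma final_lin {e a b : L} (h1 : e ⊓ a ≤ b) (h2 : e ⊓ b ≤ a) :
    (a < e → b = a) ∧ (e ≤ a → e ≤ b) := by
  constructor
  · intro h
    have hab : a ≤ b := le_trans (le_inf h.le le_rfl) h1
    rcases le_total e b with hle | hle
    · exact absurd (le_trans (le_inf le_rfl hle) h2) (not_le.mpr h)
    · exact le_antisymm (le_trans (le_inf hle le_rfl) h2) hab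
  · intro h
    exact le_trans (le_inf le_rfl h) h1

theorem stmt10 [Nonempty U] {I : Type*} (S S' : I → U → U → L) (X X' : U → U → L) :
    ((SD1 S X < eqd X X' ⊓ famEq S S' → SD1 S' X' = SD1 S X) ∧
      (eqd X X' ⊓ famEq S S' ≤ SD1 S X → eqd X X' ⊓ famEq S S' ≤ SD1 S' X')) ∧
    ((SD2 S X < eqd X X' ⊓ famEq S S' → SD2 S' X' = SD2 S X) ∧
      (eqd X X' ⊓ famEq S S' ≤ SD2 S X → eqd X X' ⊓ famEq S S' ≤ SD2 S' X')) ∧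
    ((SD3 S X < eqd X X' ⊓ famEq S S' → SD3 S' X' = SD3 S X) ∧
      (eqd X X' ⊓ famEq S S' ≤ SD3 S X → eqd X X' ⊓ famEq S S' ≤ SD3 S' X')) := by
  have hsymm : eqd X' X ⊓ famEq S' S = eqd X X' ⊓ famEq S S' := by
    rw [eqd_symm, famEq_symm]
  refine ⟨final_lin (sd1_stable S S' X X') ?_,
    final_lin (sd2_stable S S' X X') ?_, final_lin (sd3_stable S S' X X') ?_⟩
  · exact hsymm ▸ sd1_stable S' S X' X
  · exact hsymm ▸ sd2_stable S' S X' X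
  · exact hsymm ▸ sd3_stable S' S X' X
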